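/- Fix ε < ε₀ and α ∈ [0,1), β = 1−α. If u and ū are two bounded Borel functions both satisfying the dynamic programming equation (u = Tu and ū = Tū with the same data F, Ψ₁, Ψ₂), and M = sup_X (u − ū) > 0 is attained in the density sense on a ball B_ε(x₀), then the set G = {x ∈ X : (u−ū)(x) = M} satisfies: for every x ∈ G ∩ Ω, the set B_ε(x) \ G has Lebesgue measure zero. -/

import Mathlib

open Metric MeasureTheory

open Classical in
/-- The double-obstacle min-max operator `T`. -/
noncomputable def dppOp {N : ℕ} (Ω : Set (EuclideanSpace ℝ (Fin N)))
    (Ψ₁ Ψ₂ F : EuclideanSpace ℝ (Fin N) → ℝ) (α β ε : ℝ)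
    (v : EuclideanSpace ℝ (Fin N) → ℝ) : EuclideanSpace ℝ (Fin N) → ℝ :=
  fun x => if x ∈ Ω then
      max (Ψ₁ x) (min (Ψ₂ x)
        (α / 2 * sSup (v '' ball x ε) + α / 2 * sInf (v '' ball x ε)
          + β * ⨍ y in ball x ε, v y))
    else F x

/-- clipping is monotone-Lipschitz: difference of clips is at most positive part of diff. -/
lemma clip_sub_le_aux (a b c c' : ℝ) :
    max a (min b c) - max a (min b c') ≤ max 0 (c - c') := by
  set m := max 0 (c - c') with hm
  have hm0 : 0 ≤ m := le_max_left _ _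
  have hc : c ≤ c' + m := by
    have := le_max_right (0 : ℝ) (c - c'); linarith
  have h1 : min b c ≤ min b c' + m := by
    calc min b c ≤ min (b + m) (c' + m) := min_le_min (by linarith) hc
    _ = min b c' + m := min_add_add_right _ _ _
  have h2 : max a (min b c) ≤ max (a + m) (min b c' + m) :=
    max_le_max (by linarith) h1
  rw [max_add_add_right] at h2
  linarith

/-- propagation of the supremum set in the uniqueness proof for `u = Tu`:
if `M = sup_X (u - ū) > 0` is attained in the density sense on a ball `B_ε(x₀)`,
then for every `x ∈ G ∩ Ω` the set `B_ε(x) \ G` has Lebesgue measure zero, where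
`G = {x ∈ X : (u - ū)(x) = M}`. -/
theorem dppOp_max_set_propagation {N : ℕ}
    (Ω : Set (EuclideanSpace ℝ (Fin N)))
    (hΩo : IsOpen Ω) (hΩb : Bornology.IsBounded Ω) (ε₀ : ℝ) (hε₀ : 0 < ε₀)
    (Γ : Set (EuclideanSpace ℝ (Fin N)))
    (hΓ : Γ = {x | x ∉ Ω ∧ Metric.infDist x Ω < ε₀})
    (X : Set (EuclideanSpace ℝ (Fin N))) (hX : X = Ω ∪ Γ)
    (α β ε : ℝ) (hα : 0 ≤ α) (hα1 : α < 1) (hβ : β = 1 - α)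
    (hε : 0 < ε) (hεε₀ : ε < ε₀)
    (Ψ₁ Ψ₂ F : EuclideanSpace ℝ (Fin N) → ℝ)
    (hΨ₁m : Measurable Ψ₁) (hΨ₂m : Measurable Ψ₂) (hFm : Measurable F)
    (hΨ₁b : ∃ M, ∀ x, |Ψ₁ x| ≤ M) (hΨ₂b : ∃ M, ∀ x, |Ψ₂ x| ≤ M)
    (hFb : ∃ M, ∀ x, |F x| ≤ M)
    (hΨ : ∀ x ∈ X, Ψ₁ x ≤ Ψ₂ x) (hF : ∀ x ∈ Γ, Ψ₁ x ≤ F x ∧ F x ≤ Ψ₂ x)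
    (u ub : EuclideanSpace ℝ (Fin N) → ℝ)
    (hum : Measurable u) (hubm : Measurable ub)
    (hub : ∃ M, ∀ x, |u x| ≤ M) (hubb : ∃ M, ∀ x, |ub x| ≤ M)
    (hu : ∀ x ∈ X, u x = dppOp Ω Ψ₁ Ψ₂ F α β ε u x)
    (hub' : ∀ x ∈ X, ub x = dppOp Ω Ψ₁ Ψ₂ F α β ε ub x)
    (M : ℝ) (hM : M = sSup ((fun x => u x - ub x) '' X)) (hMpos : 0 < M)
    (x₀ : EuclideanSpace ℝ (Fin N)) (hx₀ : x₀ ∈ closure Ω)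
    (hdens : M ≤ ⨍ y in ball x₀ ε, (u y - ub y))
    (G : Set (EuclideanSpace ℝ (Fin N))) (hG : G = {x ∈ X | u x - ub x = M}) :
    ∀ x ∈ G ∩ Ω, volume (ball x ε \ G) = 0 := by
  obtain ⟨Cu, hCu⟩ := hub
  obtain ⟨Cb, hCb⟩ := hubb
  have hβ0 : 0 < β := by rw [hβ]; linarith
  -- (u - ub) ≤ M on X
  have hbddX : BddAbove ((fun x => u x - ub x) '' X) := by
    refine ⟨Cu + Cb, ?_⟩
    rintro _ ⟨z, _, rfl⟩
    have := abs_le.mp (hCu z); have := abs_le.mp (hCb z); dsimp; linarith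
  have hle : ∀ y ∈ X, u y - ub y ≤ M := fun y hy => by
    rw [hM]; exact le_csSup hbddX ⟨y, hy, rfl⟩
  rintro x ⟨hxG, hxΩ⟩
  have hxX : x ∈ X := hX ▸ Or.inl hxΩ
  have hxM : u x - ub x = M := by rw [hG] at hxG; exact hxG.2
  set B := ball x ε with hB
  have hBX : B ⊆ X := by
    intro y hy
    rw [hX]
    by_cases hyΩ : y ∈ Ω
    · exact Or.inl hyΩ
    · refine Or.inr ?_
      rw [hΓ]
      refine ⟨hyΩ, lt_of_le_of_lt (infDist_le_dist_of_mem hxΩ) ?_⟩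
      calc dist y x < ε := mem_ball.mp hy
      _ < ε₀ := hεε₀
  have hBmeas : MeasurableSet B := measurableSet_ball
  have hBvol : volume B ≠ 0 := by
    simp [hB, Metric.measure_ball_pos volume x hε |>.ne']
  have hBvolne : volume B ≠ ⊤ := measure_ball_lt_top.ne
  -- abbreviations
  set Su := sSup (u '' B) with hSu
  set Sb := sSup (ub '' B) with hSb
  set Iu := sInf (u '' B) with hIu
  set Ib := sInf (ub '' B) with hIb
  set Au := ⨍ y in B, u y with hAu
  set Ab := ⨍ y in B, ub y with hAb
  have hBne : (u '' B).Nonempty := ⟨u x, x, mem_ball_self hε, rfl⟩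
  have hBne' : (ub '' B).Nonempty := ⟨ub x, x, mem_ball_self hε, rfl⟩
  have hbAu : BddAbove (u '' B) := ⟨Cu, by rintro _ ⟨z, _, rfl⟩; exact (abs_le.mp (hCu z)).2⟩
  have hbAb : BddAbove (ub '' B) := ⟨Cb, by rintro _ ⟨z, _, rfl⟩; exact (abs_le.mp (hCb z)).2⟩
  have hbBu : BddBelow (u '' B) := ⟨-Cu, by rintro _ ⟨z, _, rfl⟩; exact (abs_le.mp (hCu z)).1⟩
  have hbBb : BddBelow (ub '' B) := ⟨-Cb, by rintro _ ⟨z, _, rfl⟩; exact (abs_le.mp (hCb z)).1⟩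
  -- sup and inf estimates
  have hSup : Su - Sb ≤ M := by
    have : Su ≤ Sb + M := by
      refine csSup_le hBne ?_
      rintro _ ⟨z, hz, rfl⟩
      have h1 : u z - ub z ≤ M := hle z (hBX hz)
      have h2 : ub z ≤ Sb := le_csSup hbAb ⟨z, hz, rfl⟩
      linarith
    linarith
  have hInf : Iu - Ib ≤ M := by
    have : Iu - M ≤ Ib := by
      refine le_csInf hBne' ?_
      rintro _ ⟨z, hz, rfl⟩
      have h1 : u z - ub z ≤ M := hle z (hBX hz)
      have h2 : Iu ≤ u z := csInf_le hbBu ⟨z, hz, rfl⟩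
      linarith
    linarith
  -- integrability
  have hconstM : Integrable (fun _ => M) (volume.restrict B) :=
    integrableOn_const measure_ball_lt_top.ne
  have hconstCu : Integrable (fun _ => Cu) (volume.restrict B) :=
    integrableOn_const measure_ball_lt_top.ne
  have hconstCb : Integrable (fun _ => Cb) (volume.restrict B) :=
    integrableOn_const measure_ball_lt_top.ne
  have hintu : Integrable u (volume.restrict B) := by
    refine Integrable.mono' hconstCu hum.aestronglyMeasurable ?_
    exact Filter.Eventually.of_forall fun z => hCu z
  have hintb : Integrable ub (volume.restrict B) := by
    refine Integrable.mono' hconstCb hubm.aestronglyMeasurable ?_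
    exact Filter.Eventually.of_forall fun z => hCb z
  have hintd : Integrable (fun y => u y - ub y) (volume.restrict B) := hintu.sub hintb
  -- average difference
  have hAvg : Au - Ab = ⨍ y in B, (u y - ub y) := by
    rw [hAu, hAb, setAverage_eq, setAverage_eq, setAverage_eq,
      integral_sub hintu hintb, smul_sub]
  -- average of difference is ≤ M
  have hAd_le : ⨍ y in B, (u y - ub y) ≤ M := by
    rw [setAverage_eq]
    have h1 : ∫ y in B, (u y - ub y) ≤ ∫ _ in B, M := by
      refine setIntegral_mono_on hintd hconstM hBmeas ?_
      exact fun z hz => hle z (hBX hz)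
    rw [setIntegral_const] at h1
    rw [smul_eq_mul]
    have hpos : 0 < (volume B).toReal := ENNReal.toReal_pos hBvol hBvolne
    rw [inv_mul_le_iff₀ (show 0 < volume.real B from hpos)]
    rw [smul_eq_mul] at h1
    linarith
  -- the dynamic programming equation at x
  have hux := hu x hxX
  have hubx := hub' x hxX
  rw [dppOp, if_pos hxΩ] at hux hubx
  set cu := α / 2 * Su + α / 2 * Iu + β * Au with hcu
  set cb := α / 2 * Sb + α / 2 * Ib + β * Ab with hcb
  have hclip : u x - ub x ≤ max 0 (cu - cb) := by
    rw [hux, hubx]; exact clip_sub_le_aux _ _ _ _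
  have hMle : M ≤ cu - cb := by
    rcases le_or_gt (cu - cb) 0 with h | h
    · rw [hxM] at hclip
      rw [max_eq_left h] at hclip; linarith
    · rw [hxM, max_eq_right h.le] at hclip; exact hclip
  -- so M ≤ average of difference
  have hMavg : M ≤ ⨍ y in B, (u y - ub y) := by
    have : M ≤ α / 2 * (Su - Sb) + α / 2 * (Iu - Ib) + β * (Au - Ab) := by
      rw [hcu, hcb] at hMle; linarith
    have h2 : M ≤ α / 2 * M + α / 2 * M + β * (Au - Ab) := by
      have hα2 : 0 ≤ α / 2 := by linarith
      nlinarith [mul_le_mul_of_nonneg_left hSup hα2, mul_le_mul_of_nonneg_left hInf hα2]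
    have h3 : β * M ≤ β * (Au - Ab) := by rw [hβ] at h2 ⊢; linarith
    have h4 : M ≤ Au - Ab := le_of_mul_le_mul_left h3 hβ0
    rwa [hAvg] at h4
  -- hence ∫ (M - (u - ub)) = 0 on B, so u - ub = M a.e. on B
  have hint0 : ∫ y in B, (M - (u y - ub y)) = 0 := by
    have hi : Integrable (fun y => M - (u y - ub y)) (volume.restrict B) :=
      hconstM.sub hintd
    have h1 : ∫ y in B, (M - (u y - ub y)) = (volume B).toReal * M - ∫ y in B, (u y - ub y) := by
      rw [integral_sub hconstM hintd, setIntegral_const, smul_eq_mul]; rfl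
    have h2 : (volume B).toReal * M ≤ ∫ y in B, (u y - ub y) := by
      have hpos : 0 < (volume B).toReal := ENNReal.toReal_pos hBvol hBvolne
      have := hMavg
      rw [setAverage_eq, smul_eq_mul] at this
      calc (volume B).toReal * M ≤ (volume B).toReal * ((volume B).toReal⁻¹ * ∫ y in B, (u y - ub y)) :=
        mul_le_mul_of_nonneg_left this hpos.le
      _ = ∫ y in B, (u y - ub y) := by field_simp
    have h3 : ∫ y in B, (u y - ub y) ≤ (volume B).toReal * M := by
      have h1' : ∫ y in B, (u y - ub y) ≤ ∫ _ in B, M := by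
        refine setIntegral_mono_on hintd hconstM hBmeas ?_
        exact fun z hz => hle z (hBX hz)
      rw [setIntegral_const, smul_eq_mul] at h1'; exact h1'
    linarith
  have hae : ∀ᵐ y ∂(volume.restrict B), M - (u y - ub y) = 0 := by
    have hi : Integrable (fun y => M - (u y - ub y)) (volume.restrict B) :=
      hconstM.sub hintd
    have hnn : 0 ≤ᵐ[volume.restrict B] fun y => M - (u y - ub y) := by
      rw [Filter.EventuallyLE, ae_restrict_iff' hBmeas]
      exact Filter.Eventually.of_forall fun z hz => by
        simp only [Pi.zero_apply]; linarith [hle z (hBX hz)]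
    have := (integral_eq_zero_iff_of_nonneg_ae hnn hi).mp hint0
    filter_upwards [this] with y hy using hy
  -- conclude
  have hnull : volume.restrict B {y | u y - ub y ≠ M} = 0 := by
    have : volume.restrict B {y | ¬ (M - (u y - ub y) = 0)} = 0 := hae
    convert this using 2
    ext y; constructor
    · intro h h'; exact h (by linarith)
    · intro h h'; exact h (by linarith)
  rw [Measure.restrict_apply' hBmeas] at hnull
  refine measure_mono_null ?_ hnull
  intro y ⟨hyB, hyG⟩
  refine ⟨?_, hyB⟩
  intro hyM
  exact hyG (hG ▸ ⟨hBX hyB, hyM⟩)
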